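/- arXiv:2106.10917 — 3 statements merged into one kernel-verified Lean document; each statement's English description precedes it below -/
import Mathlib

section
/- For integers k_1,...,k_r ≥ 1, r ≥ 1, and n ≥ 0, the multi-Bernoulli numbers satisfy B_n^{(k_1,...,k_r)} = Σ_{l=0}^{n} Σ_{m=r}^{l+r} [ binom(n,l) B_{n−l}^{(r)} (−1)^{n−r−m} / (r! binom(l+r,r)) ] · S_2(l+r,m) · S_1^{(k_1,...,k_r)}(m,r), where B_j^{(r)} are the Bernoulli numbers of order r and S_2 are the Stirling numbers of the second kind. -/
open scoped Classical in
/-- The coefficient of `z^n` in the multiple logarithm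
`Li_{k_1,...,k_r}(z) = Σ_{0<m_1<⋯<m_r} z^{m_r}/(m_1^{k_1}⋯m_r^{k_r})`, i.e.
`Σ_{0<m_1<⋯<m_{r-1}<m_r=n} 1/(m_1^{k_1}⋯m_r^{k_r})` (integer indices allowed; for a strictly
increasing positive tuple, `m_r` is the supremum of its entries). -/
noncomputable def liCoeff (r : ℕ) (k : Fin r → ℤ) (n : ℕ) : ℚ :=
  ∑ m : Fin r → Fin (n + 1),
    if StrictMono m ∧ (∀ i, 0 < m i) ∧ (Finset.univ.sup fun i => (m i : ℕ)) = n then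
      (∏ i, ((m i : ℕ) : ℚ) ^ (k i))⁻¹
    else 0

/-- Multi-Stirling numbers of the first kind:
`S_1^{(k_1,...,k_r)}(n,r) = n! ⬝ Σ_{0<m_1<⋯<m_{r-1}<n} 1/(m_1^{k_1}⋯m_{r-1}^{k_{r-1}} n^{k_r})`,
so that `Li_{k_1,...,k_r}(t) = Σ_{n≥r} S_1^{(k_1,...,k_r)}(n,r) t^n/n!`. -/
noncomputable def multiStirling1 (r : ℕ) (k : Fin r → ℕ) (n : ℕ) : ℚ :=
  (n.factorial : ℚ) * liCoeff r (fun i => (k i : ℤ)) n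

/-- The formal power series `1 - e^{-t} ∈ ℚ⟦t⟧`. -/
noncomputable def oneSubExpNeg : PowerSeries ℚ :=
  1 - PowerSeries.rescale (-1) (PowerSeries.exp ℚ)

/-- Multi-Bernoulli numbers, defined by the formal power series identity
`Σ_{n≥0} B_n^{(k_1,...,k_r)} t^n/n! = Li_{k_1,...,k_r}(1-e^{-t})/(1-e^{-t})^r
  = Σ_{m≥r} (S_1^{(k_1,...,k_r)}(m,r)/m!) (1-e^{-t})^{m-r}` in `ℚ⟦t⟧`,
where `S_1^{(k_1,...,k_r)}(m,r)/m! = liCoeff r k m`. Since `(1-e^{-t})^j` has order `≥ j`,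
the `n`-th coefficient of the series only involves the (finitely many) terms with
`j = m - r ≤ n`, so the infinite sum may be truncated exactly. -/
noncomputable def multiBernoulli (r : ℕ) (k : Fin r → ℕ) (n : ℕ) : ℚ :=
  (n.factorial : ℚ) *
    PowerSeries.coeff n
      (∑ j ∈ Finset.range (n + 1), liCoeff r (fun i => (k i : ℤ)) (j + r) • oneSubExpNeg ^ j)

/-- Stirling numbers of the second kind, defined by `(e^t-1)^j/j! = Σ_{n≥j} S_2(n,j) t^n/n!`. -/
noncomputable def stirling2 (n j : ℕ) : ℚ :=
  (n.factorial : ℚ) / j.factorial * PowerSeries.coeff n ((PowerSeries.exp ℚ - 1) ^ j)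

/-- Bernoulli numbers of order `r`, defined by `(t/(e^t-1))^r = Σ_{n≥0} B_n^{(r)} t^n/n!`, where
`t/(e^t-1)` is the inverse in `ℚ⟦t⟧` of the power series `(e^t-1)/t = Σ_i t^i/(i+1)!`. -/
noncomputable def bernoulliOrder (r n : ℕ) : ℚ :=
  (n.factorial : ℚ) *
    PowerSeries.coeff n ((PowerSeries.mk fun i => (1 : ℚ) / (i + 1).factorial)⁻¹ ^ r)

section Aux
open PowerSeries

noncomputable def gSer : PowerSeries ℚ := PowerSeries.mk fun i => (1 : ℚ) / (i + 1).factorial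

lemma exp_sub_one_eq : PowerSeries.exp ℚ - 1 = X * gSer := by
  ext n
  cases n with
  | zero => simp [gSer, PowerSeries.coeff_exp]
  | succ n =>
    rw [coeff_succ_X_mul]
    simp [gSer, PowerSeries.coeff_exp, Nat.succ_ne_zero]

lemma gSer_mul_inv : gSer * gSer⁻¹ = 1 := by
  apply PowerSeries.mul_inv_cancel
  have : constantCoeff gSer = 1 := by
    rw [← coeff_zero_eq_constantCoeff_apply]; simp [gSer]
  rw [this]; norm_num

lemma star_id (r j : ℕ) : gSer⁻¹ ^ r * (X * gSer) ^ (j + r) = X ^ r * (X * gSer) ^ j := by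
  have h : gSer ^ r * gSer⁻¹ ^ r = 1 := by rw [← mul_pow, gSer_mul_inv, one_pow]
  calc gSer⁻¹ ^ r * (X * gSer) ^ (j + r)
      = (gSer ^ r * gSer⁻¹ ^ r) * (X ^ r * (X * gSer) ^ j) := by
        rw [pow_add, mul_pow]; ring
    _ = X ^ r * (X * gSer) ^ j := by rw [h, one_mul]

lemma coeff_stir (b j : ℕ) :
    PowerSeries.coeff b ((PowerSeries.exp ℚ - 1) ^ j) =
      (j.factorial : ℚ) * stirling2 b j / b.factorial := by
  rw [stirling2]
  have hb : (b.factorial : ℚ) ≠ 0 := Nat.cast_ne_zero.2 b.factorial_ne_zero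
  have hj : (j.factorial : ℚ) ≠ 0 := Nat.cast_ne_zero.2 j.factorial_ne_zero
  field_simp

lemma coeff_XG_pow_eq_zero {b s : ℕ} (h : b < s) :
    PowerSeries.coeff b ((X * gSer) ^ s) = 0 := by
  rw [mul_pow, mul_comm ((X : PowerSeries ℚ) ^ s), coeff_mul_X_pow']
  rw [if_neg (by omega)]

lemma stirling2_eq_zero {b j : ℕ} (h : b < j) : stirling2 b j = 0 := by
  rw [stirling2, exp_sub_one_eq, coeff_XG_pow_eq_zero h, mul_zero]

lemma coeff_gInv (r a : ℕ) :
    PowerSeries.coeff a (gSer⁻¹ ^ r) = bernoulliOrder r a / a.factorial := by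
  have ha : (a.factorial : ℚ) ≠ 0 := Nat.cast_ne_zero.2 a.factorial_ne_zero
  rw [bernoulliOrder]
  show PowerSeries.coeff a (gSer⁻¹ ^ r) =
    (a.factorial : ℚ) * PowerSeries.coeff a (gSer⁻¹ ^ r) / a.factorial
  field_simp

lemma lemA (r j n : ℕ) (hr : 1 ≤ r) :
    ∑ l ∈ Finset.range (n + 1),
      bernoulliOrder r (n - l) / (n - l).factorial *
        (((j + r).factorial : ℚ) * stirling2 (l + r) (j + r) / (l + r).factorial)
    = (j.factorial : ℚ) * stirling2 n j / n.factorial := by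
  have key := congrArg (PowerSeries.coeff (n + r)) (star_id r j)
  rw [PowerSeries.coeff_X_pow_mul, PowerSeries.coeff_mul,
    Finset.Nat.sum_antidiagonal_eq_sum_range_succ_mk] at key
  have shrink :
      (∑ i ∈ Finset.range (n + r + 1),
          PowerSeries.coeff i (gSer⁻¹ ^ r) *
            PowerSeries.coeff (n + r - i) ((X * gSer) ^ (j + r)))
        = ∑ i ∈ Finset.range (n + 1),
          PowerSeries.coeff i (gSer⁻¹ ^ r) *
            PowerSeries.coeff (n + r - i) ((X * gSer) ^ (j + r)) := by
    refine (Finset.sum_subset (by intro i hi; simp at hi ⊢; omega) ?_).symm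
    intro i hi hni
    simp only [Finset.mem_range] at hi hni
    rw [coeff_XG_pow_eq_zero (by omega), mul_zero]
  rw [shrink] at key
  rw [← (Finset.sum_range_reflect (fun i =>
    PowerSeries.coeff i (gSer⁻¹ ^ r) *
      PowerSeries.coeff (n + r - i) ((X * gSer) ^ (j + r))) (n + 1))] at key
  rw [← coeff_stir, exp_sub_one_eq, ← key]
  refine Finset.sum_congr rfl fun l hl => ?_
  simp only [Finset.mem_range] at hl
  have h1 : n + 1 - 1 - l = n - l := by omega
  have h2 : n + r - (n - l) = l + r := by omega
  rw [h1, h2, coeff_gInv, ← exp_sub_one_eq, coeff_stir]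

lemma oneSubExpNeg_eq :
    oneSubExpNeg = -(PowerSeries.rescale (-1) (PowerSeries.exp ℚ - 1)) := by
  rw [oneSubExpNeg, map_sub, map_one]
  ring

lemma coeff_oneSubExpNeg_pow (n j : ℕ) :
    PowerSeries.coeff n (oneSubExpNeg ^ j) =
      (-1 : ℚ) ^ (n + j) * PowerSeries.coeff n ((PowerSeries.exp ℚ - 1) ^ j) := by
  rw [oneSubExpNeg_eq, neg_pow, ← map_pow]
  have hC : ((-1 : PowerSeries ℚ)) ^ j = PowerSeries.C ((-1 : ℚ) ^ j) := by
    rw [map_pow, map_neg, map_one]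
  rw [hC, PowerSeries.coeff_C_mul, PowerSeries.coeff_rescale]
  ring

end Aux

/-- For integers `k_1,...,k_r ≥ 1`, `r ≥ 1` and `n ≥ 0`, the multi-Bernoulli numbers satisfy
`B_n^{(k_1,...,k_r)} = Σ_{l=0}^{n} Σ_{m=r}^{l+r} [C(n,l) B_{n−l}^{(r)} (−1)^{n−r−m}/(r! C(l+r,r))]
  ⬝ S_2(l+r,m) ⬝ S_1^{(k_1,...,k_r)}(m,r)`. -/
theorem multiBernoulli_eq_sum_multiStirling1 (r : ℕ) (hr : 1 ≤ r) (k : Fin r → ℕ)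
    (hk : ∀ i, 1 ≤ k i) (n : ℕ) :
    multiBernoulli r k n =
      ∑ l ∈ Finset.range (n + 1), ∑ m ∈ Finset.Icc r (l + r),
        (n.choose l : ℚ) * bernoulliOrder r (n - l) *
            (-1 : ℚ) ^ ((n : ℤ) - (r : ℤ) - (m : ℤ)) /
            ((r.factorial : ℚ) * ((l + r).choose r : ℚ)) *
          stirling2 (l + r) m * multiStirling1 r k m := by
  have hfac : ∀ a : ℕ, (a.factorial : ℚ) ≠ 0 := fun a => Nat.cast_ne_zero.2 a.factorial_ne_zero
  set c : ℕ → ℚ := fun m => liCoeff r (fun i => (k i : ℤ)) m with hc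
  -- LHS
  have hL : multiBernoulli r k n =
      ∑ j ∈ Finset.range (n + 1),
        (-1 : ℚ) ^ (n + j) * j.factorial * stirling2 n j * c (j + r) := by
    rw [multiBernoulli, map_sum, Finset.mul_sum]
    refine Finset.sum_congr rfl fun j hj => ?_
    rw [LinearMap.map_smul, smul_eq_mul, coeff_oneSubExpNeg_pow, coeff_stir]
    field_simp
    ring
  rw [hL]
  -- RHS : reindex inner sum
  have hR : ∀ l, (∑ m ∈ Finset.Icc r (l + r),
        (n.choose l : ℚ) * bernoulliOrder r (n - l) *
            (-1 : ℚ) ^ ((n : ℤ) - (r : ℤ) - (m : ℤ)) /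
            ((r.factorial : ℚ) * ((l + r).choose r : ℚ)) *
          stirling2 (l + r) m * multiStirling1 r k m)
      = ∑ j ∈ Finset.range (l + 1),
        (n.choose l : ℚ) * bernoulliOrder r (n - l) *
            (-1 : ℚ) ^ ((n : ℤ) - (r : ℤ) - ((r + j : ℕ) : ℤ)) /
            ((r.factorial : ℚ) * ((l + r).choose r : ℚ)) *
          stirling2 (l + r) (r + j) * multiStirling1 r k (r + j) := by
    intro l
    rw [← Finset.Ico_add_one_right_eq_Icc, Finset.sum_Ico_eq_sum_range]
    have : l + r + 1 - r = l + 1 := by omega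
    rw [this]
  rw [Finset.sum_congr rfl fun l _ => hR l]
  -- extend inner sums to range (n+1)
  have hExt : ∀ l ∈ Finset.range (n + 1),
      (∑ j ∈ Finset.range (l + 1),
        (n.choose l : ℚ) * bernoulliOrder r (n - l) *
            (-1 : ℚ) ^ ((n : ℤ) - (r : ℤ) - ((r + j : ℕ) : ℤ)) /
            ((r.factorial : ℚ) * ((l + r).choose r : ℚ)) *
          stirling2 (l + r) (r + j) * multiStirling1 r k (r + j))
      = ∑ j ∈ Finset.range (n + 1),
        (n.choose l : ℚ) * bernoulliOrder r (n - l) *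
            (-1 : ℚ) ^ ((n : ℤ) - (r : ℤ) - ((r + j : ℕ) : ℤ)) /
            ((r.factorial : ℚ) * ((l + r).choose r : ℚ)) *
          stirling2 (l + r) (r + j) * multiStirling1 r k (r + j) := by
    intro l hl
    simp only [Finset.mem_range] at hl
    refine Finset.sum_subset (by intro i hi; simp at hi ⊢; omega) ?_
    intro j hj hnj
    simp only [Finset.mem_range] at hj hnj
    rw [stirling2_eq_zero (by omega), mul_zero, zero_mul]
  rw [Finset.sum_congr rfl hExt, Finset.sum_comm]
  -- per-j identity
  refine Finset.sum_congr rfl fun j hj => ?_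
  have hsgn : (-1 : ℚ) ^ ((n : ℤ) - (r : ℤ) - ((r + j : ℕ) : ℤ)) = (-1 : ℚ) ^ (n + j) := by
    have h1 : ((n : ℤ) - (r : ℤ) - ((r + j : ℕ) : ℤ))
        = ((n + j : ℕ) : ℤ) - ((2 * (r + j) : ℕ) : ℤ) := by push_cast; ring
    rw [h1, zpow_sub₀ (by norm_num : (-1 : ℚ) ≠ 0), zpow_natCast, zpow_natCast, pow_mul]
    norm_num
  have hterm : ∀ l ∈ Finset.range (n + 1),
      (n.choose l : ℚ) * bernoulliOrder r (n - l) *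
            (-1 : ℚ) ^ ((n : ℤ) - (r : ℤ) - ((r + j : ℕ) : ℤ)) /
            ((r.factorial : ℚ) * ((l + r).choose r : ℚ)) *
          stirling2 (l + r) (r + j) * multiStirling1 r k (r + j)
      = ((-1 : ℚ) ^ (n + j) * c (r + j) * n.factorial) *
          (bernoulliOrder r (n - l) / (n - l).factorial *
            (((j + r).factorial : ℚ) * stirling2 (l + r) (j + r) / (l + r).factorial)) := by
    intro l hl
    simp only [Finset.mem_range] at hl
    rw [hsgn, multiStirling1]
    rw [Nat.cast_choose ℚ (show l ≤ n by omega), Nat.cast_choose ℚ (show r ≤ l + r by omega)]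
    have e1 : l + r - r = l := by omega
    have e2 : j + r = r + j := by omega
    rw [e1, e2]
    have h1 := hfac l; have h2 := hfac (n - l); have h3 := hfac r
    have h4 := hfac (l + r); have h5 := hfac n
    field_simp
    ring
  rw [Finset.sum_congr rfl hterm, ← Finset.mul_sum, lemA r j n hr]
  have e2 : j + r = r + j := by omega
  rw [← e2]
  field_simp [hc]
end

section
/- For integers k_1,...,k_r ≥ 1 and n, r ≥ 1, the multi-Lah numbers with last index negated satisfy L^{(k_1,...,k_{r−1},−k_r)}(n,r) = Σ_{p=r}^{n} Σ_{l=1}^{p} Σ_{m_r=1}^{p} Σ_{j=0}^{k_r} (−1)^{m_r+l} m_r! · m_r^{k_r−j} · binom(p,l) · binom(k_r,j) · S_2(l,m_r) · L^{(k_1,...,k_{r−2},k_{r−1}−j)}(p−l, r−1) · n!/p!, where S_2 are the Stirling numbers of the second kind. -/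
/-- Multi-Lah numbers, defined by the formal power series identity
`Σ_{n≥r} L^{(k_1,...,k_r)}(n,r) t^n/n! = Li_{k_1,...,k_r}(1-e^{-t})/(1-t)^r
  = (1-t)^{-r} ⬝ Σ_{m} liCoeff(m) (1-e^{-t})^m` in `ℚ⟦t⟧` (integer indices allowed).
Since `(1-e^{-t})^m` has order `≥ m`, the `n`-th coefficient of the series only involves the
(finitely many) terms with `m ≤ n`, so the infinite sum may be truncated exactly. -/
noncomputable def multiLah (r : ℕ) (k : Fin r → ℤ) (n : ℕ) : ℚ :=
  (n.factorial : ℚ) *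
    PowerSeries.coeff n
      (((1 - PowerSeries.X : PowerSeries ℚ) ^ r)⁻¹ *
        ∑ m ∈ Finset.range (n + 1), liCoeff r k m • oneSubExpNeg ^ m)

open PowerSeries Finset

noncomputable def Jser : PowerSeries ℚ := PowerSeries.mk fun _ => (1 : ℚ)

lemma constCoeff_z : PowerSeries.constantCoeff oneSubExpNeg = 0 := by
  rw [oneSubExpNeg, ← coeff_zero_eq_constantCoeff_apply, map_sub, PowerSeries.coeff_rescale,
    coeff_exp]
  norm_num

lemma coeff_z_pow_eq_zero {d m : ℕ} (h : d < m) :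
    PowerSeries.coeff d (oneSubExpNeg ^ m) = 0 := by
  have hX : (PowerSeries.X : PowerSeries ℚ) ∣ oneSubExpNeg := X_dvd_iff.2 constCoeff_z
  have : (PowerSeries.X : PowerSeries ℚ) ^ m ∣ oneSubExpNeg ^ m := pow_dvd_pow_of_dvd hX m
  exact X_pow_dvd_iff.1 this d h

lemma one_sub_X_mul_J : ((1 : PowerSeries ℚ) - PowerSeries.X) * Jser = 1 := by
  ext d
  simp only [sub_mul, one_mul, map_sub]
  cases d with
  | zero => simp [Jser, coeff_zero_eq_constantCoeff_apply]
  | succ d => simp [Jser, PowerSeries.coeff_succ_X_mul, PowerSeries.coeff_one]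

lemma constCoeff_one_sub_X_pow (r : ℕ) :
    PowerSeries.constantCoeff (((1 : PowerSeries ℚ) - PowerSeries.X) ^ r) ≠ 0 := by
  simp [map_pow, map_sub]

lemma inv_pow_one_sub_X (r : ℕ) :
    (((1 : PowerSeries ℚ) - PowerSeries.X) ^ r)⁻¹ = Jser ^ r := by
  rw [PowerSeries.inv_eq_iff_mul_eq_one (constCoeff_one_sub_X_pow r)]
  rw [← mul_pow, mul_comm, one_sub_X_mul_J, one_pow]

lemma coeff_J (n : ℕ) : PowerSeries.coeff n Jser = 1 := by simp [Jser]

lemma coeff_J_mul (n : ℕ) (H : PowerSeries ℚ) :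
    PowerSeries.coeff n (Jser * H) = ∑ q ∈ range (n + 1), PowerSeries.coeff q H := by
  rw [PowerSeries.coeff_mul, Finset.Nat.sum_antidiagonal_eq_sum_range_succ_mk]
  simp only [coeff_J, one_mul]
  have h := Finset.sum_range_reflect (fun q => PowerSeries.coeff q H) (n + 1)
  simp only [Nat.add_sub_cancel] at h
  exact h

lemma stirling_coeff (l m : ℕ) :
    (-1 : ℚ) ^ (m + l) * m.factorial * stirling2 l m
      = (l.factorial : ℚ) * PowerSeries.coeff l (oneSubExpNeg ^ m) := by
  have hz : oneSubExpNeg = (-1 : ℚ) • (PowerSeries.rescale (-1) (PowerSeries.exp ℚ - 1)) := by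
    rw [map_sub, map_one, oneSubExpNeg]; module
  have : oneSubExpNeg ^ m
      = ((-1 : ℚ) ^ m) • PowerSeries.rescale (-1) ((PowerSeries.exp ℚ - 1) ^ m) := by
    rw [hz, smul_pow, map_pow]
  rw [this, map_smul, smul_eq_mul, PowerSeries.coeff_rescale, stirling2]
  have hm : (m.factorial : ℚ) ≠ 0 := Nat.cast_ne_zero.2 m.factorial_ne_zero
  field_simp
  ring


section Comb
open scoped Classical

variable {r N : ℕ}

lemma sup_eq_last {m : Fin (r + 1) → Fin (N + 1)} (h : StrictMono m) :
    (Finset.univ.sup fun i => (m i : ℕ)) = (m (Fin.last r) : ℕ) := by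
  refine le_antisymm (Finset.sup_le fun i _ => h.monotone (Fin.le_last i))
    (Finset.le_sup (f := fun i => (m i : ℕ)) (Finset.mem_univ (Fin.last r)))

lemma strictMono_snoc_iff {v : Fin r → Fin (N + 1)} {L : Fin (N + 1)} :
    StrictMono (Fin.snoc v L : Fin (r + 1) → Fin (N + 1)) ↔ StrictMono v ∧ ∀ i, v i < L := by
  constructor
  · intro h
    refine ⟨fun i j hij => ?_, fun i => ?_⟩
    · have := h (Fin.castSucc_lt_castSucc_iff.2 hij)
      simpa using this
    · have := h (Fin.castSucc_lt_last i)
      simpa using this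
  · rintro ⟨hv, hL⟩ i j hij
    induction j using Fin.lastCases with
    | last =>
        obtain ⟨i', rfl⟩ := Fin.exists_castSucc_eq.2 (Fin.ne_last_of_lt hij)
        simpa using hL i'
    | cast j' =>
        obtain ⟨i', rfl⟩ := Fin.exists_castSucc_eq.2
          (Fin.ne_last_of_lt (hij.trans (Fin.castSucc_lt_last j')))
        have h2 : i' < j' := by simpa using hij
        simpa using hv h2

lemma fin_lt_apply {m : Fin (r + 1) → Fin (N + 1)} (hsm : StrictMono m)
    (hpos : ∀ i, 0 < m i) (i : Fin (r + 1)) : (i : ℕ) < (m i : ℕ) := by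
  induction i using Fin.induction with
  | zero => exact hpos 0
  | succ i ih =>
      have h1 : (m i.castSucc : ℕ) < (m i.succ : ℕ) := hsm (Fin.castSucc_lt_succ (i := i))
      have h2 : (i.castSucc : ℕ) < (m i.castSucc : ℕ) := ih
      simp only [Fin.val_succ, Fin.coe_castSucc] at *
      omega

lemma liCoeff_eq_zero {r M : ℕ} (k : Fin r → ℤ) (h : M < r) : liCoeff r k M = 0 := by
  rcases r with _ | r'
  · omega
  rw [liCoeff]
  refine Finset.sum_eq_zero fun m _ => ?_
  rw [if_neg]
  rintro ⟨hsm, hpos, hsup⟩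
  have h1 := fin_lt_apply hsm hpos (Fin.last r')
  rw [sup_eq_last hsm] at hsup
  simp only [Fin.val_last] at h1
  omega
end Comb

section Comb2
open scoped Classical

lemma fin_fun_heq {r M M' : ℕ} (h : M' = M) {u' : Fin r → Fin (M' + 1)}
    {u : Fin r → Fin (M + 1)} (hval : ∀ i, (u' i : ℕ) = (u i : ℕ)) : HEq u' u := by
  subst h
  exact heq_of_eq (funext fun i => Fin.ext (hval i))

lemma liCoeff_sub (r : ℕ) (k : Fin r → ℤ) (c : ℤ) (j : ℕ) (M : ℕ) :
    liCoeff (r + 1) (Fin.snoc k (c - (j : ℤ))) M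
      = (M : ℚ) ^ j * liCoeff (r + 1) (Fin.snoc k c) M := by
  rcases Nat.eq_zero_or_pos M with rfl | hM
  · rw [liCoeff_eq_zero _ (Nat.succ_pos r), liCoeff_eq_zero _ (Nat.succ_pos r), mul_zero]
  · rw [liCoeff, liCoeff, Finset.mul_sum]
    refine Finset.sum_congr rfl fun m _ => ?_
    by_cases hcond : StrictMono m ∧ (∀ i, 0 < m i) ∧ (Finset.univ.sup fun i => (m i : ℕ)) = M
    · rw [if_pos hcond, if_pos hcond]
      obtain ⟨hsm, hpos, hsup⟩ := hcond
      have hlast : ((m (Fin.last r) : ℕ) : ℚ) = (M : ℚ) := by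
        exact_mod_cast congrArg (Nat.cast : ℕ → ℚ) ((sup_eq_last hsm).symm.trans hsup)
      have hM0 : (M : ℚ) ≠ 0 := Nat.cast_ne_zero.2 (by omega)
      rw [Fin.prod_univ_castSucc, Fin.prod_univ_castSucc]
      simp only [Fin.snoc_castSucc, Fin.snoc_last]
      rw [hlast]
      have key : ((M : ℚ) ^ (c - (j : ℤ)))⁻¹ = (M : ℚ) ^ j * ((M : ℚ) ^ c)⁻¹ := by
        rw [zpow_sub₀ hM0, inv_div, div_eq_mul_inv, ← zpow_natCast (M : ℚ) j]
      rw [mul_inv, mul_inv, key]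
      ring
    · rw [if_neg hcond, if_neg hcond, mul_zero]

lemma liCoeff_succ (r : ℕ) (k : Fin r → ℤ) (c : ℤ) (N : ℕ) (hN : 0 < N) :
    liCoeff (r + 1) (Fin.snoc k c) N = ((N : ℚ) ^ c)⁻¹ * ∑ M ∈ Finset.range N, liCoeff r k M := by
  simp only [liCoeff, Finset.mul_sum]
  simp_rw [mul_ite, mul_zero]
  rw [Finset.sum_sigma']
  rw [← Finset.sum_filter, ← Finset.sum_filter]
  refine Finset.sum_bij'
    (fun m _ => (⟨Finset.univ.sup fun i => (m (Fin.castSucc i) : ℕ),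
        fun i => ⟨(m (Fin.castSucc i) : ℕ),
          Nat.lt_succ_of_le (Finset.le_sup (f := fun i => (m (Fin.castSucc i) : ℕ))
            (Finset.mem_univ i))⟩⟩ :
        (M : ℕ) × (Fin r → Fin (M + 1))))
    (fun x hx => Fin.snoc (fun i => Fin.castLE (by
        have h1 := (Finset.mem_sigma.1 (Finset.mem_filter.1 hx).1).1
        exact Nat.succ_le_succ (Finset.mem_range.1 h1).le) (x.2 i)) (Fin.last N))
    ?_ ?_ ?_ ?_ ?_
  · -- hi
    intro m hm
    simp only [Finset.mem_filter, Finset.mem_univ, true_and] at hm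
    obtain ⟨hsm, hpos, hsup⟩ := hm
    have hlast : (m (Fin.last r) : ℕ) = N := (sup_eq_last hsm).symm.trans hsup
    have hvlt : ∀ i : Fin r, (m (Fin.castSucc i) : ℕ) < N := by
      intro i
      have h2 : (m (Fin.castSucc i) : ℕ) < (m (Fin.last r) : ℕ) := hsm (Fin.castSucc_lt_last i)
      omega
    simp only [Finset.mem_filter, Finset.mem_sigma, Finset.mem_range, Finset.mem_univ, true_and, and_true]
    refine ⟨(Finset.sup_lt_iff (by simpa using hN)).2 fun i _ => hvlt i, ?_, ?_⟩
    · intro i j hij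
      rw [Fin.mk_lt_mk]
      exact hsm (Fin.castSucc_lt_castSucc_iff.2 hij)
    · intro i
      rw [Fin.lt_def]
      exact hpos (Fin.castSucc i)
  · -- hj
    intro x hx
    simp only [Finset.mem_filter, Finset.mem_sigma, Finset.mem_range, Finset.mem_univ,
      true_and, and_true] at hx
    obtain ⟨hMN, hsm, hpos, hsup⟩ := hx
    have hsm' : StrictMono (Fin.snoc (fun i => Fin.castLE (by
        have h1 := (Finset.mem_sigma.1 (Finset.mem_filter.1 ‹_›).1).1
        exact Nat.succ_le_succ (Finset.mem_range.1 h1).le) (x.2 i)) (Fin.last N) :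
        Fin (r + 1) → Fin (N + 1)) := by
      refine strictMono_snoc_iff.2 ⟨fun i j hij => ?_, fun i => ?_⟩
      · exact (Fin.strictMono_castLE _) (hsm hij)
      · rw [Fin.lt_def]
        simp only [Fin.coe_castLE, Fin.val_last]
        have := Fin.is_le (x.2 i)
        omega
    simp only [Finset.mem_filter, Finset.mem_univ, true_and]
    refine ⟨hsm', fun i => ?_, ?_⟩
    · induction i using Fin.lastCases with
      | last => rw [Fin.snoc_last]; rw [Fin.lt_def]; simpa using hN
      | cast i =>
          rw [Fin.snoc_castSucc, Fin.lt_def]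
          simpa using hpos i
    · rw [sup_eq_last hsm', Fin.snoc_last]
      simp
  · -- left inverse
    intro m hm
    simp only [Finset.mem_filter, Finset.mem_univ, true_and] at hm
    obtain ⟨hsm, hpos, hsup⟩ := hm
    have hlast : (m (Fin.last r) : ℕ) = N := (sup_eq_last hsm).symm.trans hsup
    funext i
    induction i using Fin.lastCases with
    | last => simp only [Fin.snoc_last]; exact Fin.ext (by simpa using hlast.symm)
    | cast i => simp only [Fin.snoc_castSucc]; exact Fin.ext (by simp)
  · -- right inverse
    intro x hx
    simp only [Finset.mem_filter, Finset.mem_sigma, Finset.mem_range, Finset.mem_univ,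
      true_and, and_true] at hx
    obtain ⟨hMN, hsm, hpos, hsup⟩ := hx
    have h1 : (Finset.univ.sup fun i =>
        ((Fin.snoc (fun i => Fin.castLE (Nat.succ_le_succ hMN.le) (x.2 i)) (Fin.last N) :
          Fin (r + 1) → Fin (N + 1)) (Fin.castSucc i) : ℕ)) = x.1 := by
      simp only [Fin.snoc_castSucc, Fin.coe_castLE]
      exact hsup
    refine Sigma.ext ?_ ?_
    · simpa using h1
    · refine fin_fun_heq (by simpa using h1) fun i => ?_
      simp
  · -- values
    intro m hm
    simp only [Finset.mem_filter, Finset.mem_univ, true_and] at hm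
    obtain ⟨hsm, hpos, hsup⟩ := hm
    have hlast2 : ((m (Fin.last r) : ℕ) : ℚ) = (N : ℚ) := by
      exact_mod_cast congrArg (Nat.cast : ℕ → ℚ) ((sup_eq_last hsm).symm.trans hsup)
    rw [Fin.prod_univ_castSucc]
    simp only [Fin.snoc_castSucc, Fin.snoc_last]
    rw [hlast2, mul_inv]
    ring

end Comb2

lemma liCoeff_rec (s : ℕ) (k : Fin s → ℤ) (a : ℤ) (b : ℕ) (N : ℕ) :
    liCoeff (s + 2) (Fin.snoc (Fin.snoc k a) (-(b : ℤ))) N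
      = ∑ j ∈ Finset.range (b + 1), (b.choose j : ℚ) *
          ∑ M ∈ Finset.range N,
            liCoeff (s + 1) (Fin.snoc k (a - (j : ℤ))) M * ((N - M : ℕ) : ℚ) ^ (b - j) := by
  rcases Nat.eq_zero_or_pos N with rfl | hN
  · rw [liCoeff_eq_zero _ (by omega)]
    simp
  · rw [(liCoeff_succ (s + 1) (Fin.snoc k a) (-(b : ℤ)) N hN :
      liCoeff (s + 2) (Fin.snoc (Fin.snoc k a) (-(b : ℤ))) N = _)]
    have hzp : (((N : ℚ) ^ (-(b : ℤ)))⁻¹ : ℚ) = (N : ℚ) ^ b := by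
      rw [zpow_neg, inv_inv, zpow_natCast]
    rw [hzp, Finset.mul_sum]
    simp_rw [liCoeff_sub s k a _ _, Finset.mul_sum]
    rw [Finset.sum_comm]
    refine Finset.sum_congr rfl fun M hM => ?_
    have hMlt := Finset.mem_range.1 hM
    have hy : ((N - M : ℕ) : ℚ) = (N : ℚ) - (M : ℚ) := Nat.cast_sub (le_of_lt hMlt)
    have hx : (M : ℚ) + ((N - M : ℕ) : ℚ) = (N : ℚ) := by rw [hy]; ring
    rw [← hx, add_pow, Finset.sum_mul]
    refine Finset.sum_congr rfl fun j _ => ?_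
    ring

noncomputable def Fser (r : ℕ) (K : Fin r → ℤ) (n : ℕ) : PowerSeries ℚ :=
  ∑ m ∈ Finset.range (n + 1), liCoeff r K m • oneSubExpNeg ^ m

noncomputable def Gser (n e : ℕ) : PowerSeries ℚ :=
  ∑ m ∈ Finset.Icc 1 n, ((m : ℚ) ^ e) • oneSubExpNeg ^ m

lemma coeff_F (r : ℕ) (K : Fin r → ℤ) (n d : ℕ) :
    PowerSeries.coeff d (Fser r K n)
      = ∑ m ∈ Finset.range (n + 1), liCoeff r K m * PowerSeries.coeff d (oneSubExpNeg ^ m) := by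
  rw [Fser, map_sum]
  exact Finset.sum_congr rfl fun m _ => by rw [map_smul, smul_eq_mul]

lemma coeff_G (n e d : ℕ) :
    PowerSeries.coeff d (Gser n e)
      = ∑ m ∈ Finset.Icc 1 n, (m : ℚ) ^ e * PowerSeries.coeff d (oneSubExpNeg ^ m) := by
  rw [Gser, map_sum]
  exact Finset.sum_congr rfl fun m _ => by rw [map_smul, smul_eq_mul]

lemma coeff_G_zero (n e : ℕ) : PowerSeries.coeff 0 (Gser n e) = 0 := by
  rw [coeff_G]
  refine Finset.sum_eq_zero fun m hm => ?_
  rw [coeff_z_pow_eq_zero (by simp only [Finset.mem_Icc] at hm; omega), mul_zero]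

lemma coeff_F_small (r : ℕ) (K : Fin r → ℤ) (n : ℕ) {d : ℕ} (hd : d < r) :
    PowerSeries.coeff d (Fser r K n) = 0 := by
  rw [coeff_F]
  refine Finset.sum_eq_zero fun m _ => ?_
  rcases lt_or_ge d m with h | h
  · rw [coeff_z_pow_eq_zero h, mul_zero]
  · rw [liCoeff_eq_zero _ (by omega), zero_mul]

lemma coeff_F_trunc (W : PowerSeries ℚ) (r : ℕ) (K : Fin r → ℤ) {q n : ℕ} (h : q ≤ n) :
    PowerSeries.coeff q (W * Fser r K q) = PowerSeries.coeff q (W * Fser r K n) := by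
  rw [PowerSeries.coeff_mul, PowerSeries.coeff_mul]
  refine Finset.sum_congr rfl fun x hx => ?_
  have hx2 : x.2 ≤ q := by
    have := Finset.HasAntidiagonal.mem_antidiagonal.1 hx
    omega
  rw [coeff_F, coeff_F]
  congr 1
  refine (Finset.sum_subset (Finset.range_subset_range.2 (by omega)) fun m hm hnot => ?_)
  simp only [Finset.mem_range] at hm hnot
  rw [coeff_z_pow_eq_zero (by omega), mul_zero]

lemma multiLah_eq (r : ℕ) (K : Fin r → ℤ) {q n : ℕ} (h : q ≤ n) :
    multiLah r K q = (q.factorial : ℚ) * PowerSeries.coeff q (Jser ^ r * Fser r K n) := by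
  rw [multiLah, inv_pow_one_sub_X]
  rw [show (∑ m ∈ Finset.range (q + 1), liCoeff r K m • oneSubExpNeg ^ m) = Fser r K q from rfl]
  rw [coeff_F_trunc _ r K h]

lemma coeff_JF_small (r : ℕ) (K : Fin r → ℤ) (n : ℕ) {q : ℕ} (h : q < r) :
    PowerSeries.coeff q (Jser ^ r * Fser r K n) = 0 := by
  rw [PowerSeries.coeff_mul]
  refine Finset.sum_eq_zero fun x hx => ?_
  have hx2 := Finset.HasAntidiagonal.mem_antidiagonal.1 hx
  rw [coeff_F_small r K n (show x.2 < r by omega), mul_zero]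

lemma coeff_GJF_small (r : ℕ) (K : Fin r → ℤ) (n e : ℕ) {q : ℕ} (h : q < r + 1) :
    PowerSeries.coeff q (Gser n e * (Jser ^ r * Fser r K n)) = 0 := by
  rw [PowerSeries.coeff_mul]
  refine Finset.sum_eq_zero fun x hx => ?_
  have hsum : x.1 + x.2 = q := Finset.HasAntidiagonal.mem_antidiagonal.1 hx
  rcases Nat.eq_zero_or_pos x.1 with h1 | h1
  · rw [show x.1 = 0 from h1, coeff_G_zero, zero_mul]
  · rw [coeff_JF_small r K n (by omega), mul_zero]

lemma coeff_mul_of_const0 (G H : PowerSeries ℚ) (p : ℕ) (h0 : PowerSeries.coeff 0 G = 0) :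
    PowerSeries.coeff p (G * H)
      = ∑ l ∈ Finset.Icc 1 p, PowerSeries.coeff l G * PowerSeries.coeff (p - l) H := by
  rw [PowerSeries.coeff_mul, Finset.Nat.sum_antidiagonal_eq_sum_range_succ_mk]
  refine (Finset.sum_subset (fun l hl => Finset.mem_range.2 (by
      simp only [Finset.mem_Icc] at hl; omega)) fun l hl hnot => ?_).symm
  simp only [Finset.mem_range, Finset.mem_Icc, not_and, not_le] at hl hnot
  have : l = 0 := by omega
  rw [this, h0, zero_mul]

lemma stirling_sum (p l n e : ℕ) (hlp : l ≤ p) (hpn : p ≤ n) :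
    ∑ mr ∈ Finset.Icc 1 p,
        (-1 : ℚ) ^ (mr + l) * mr.factorial * (mr : ℚ) ^ e * stirling2 l mr
      = (l.factorial : ℚ) * PowerSeries.coeff l (Gser n e) := by
  rw [coeff_G, Finset.mul_sum]
  have key : ∀ mr : ℕ, (-1 : ℚ) ^ (mr + l) * mr.factorial * (mr : ℚ) ^ e * stirling2 l mr
      = (mr : ℚ) ^ e * ((l.factorial : ℚ) * PowerSeries.coeff l (oneSubExpNeg ^ mr)) := by
    intro mr
    rw [← stirling_coeff]
    ring
  have h1 : ∑ mr ∈ Finset.Icc 1 p,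
        (-1 : ℚ) ^ (mr + l) * mr.factorial * (mr : ℚ) ^ e * stirling2 l mr
      = ∑ mr ∈ Finset.Icc 1 n,
        (-1 : ℚ) ^ (mr + l) * mr.factorial * (mr : ℚ) ^ e * stirling2 l mr := by
    refine Finset.sum_subset (Finset.Icc_subset_Icc_right hpn) fun mr hm hnot => ?_
    rw [key, coeff_z_pow_eq_zero (by
      simp only [Finset.mem_Icc, not_and, not_le] at hm hnot; omega), mul_zero, mul_zero]
  rw [h1]
  exact Finset.sum_congr rfl fun mr _ => by rw [key]; ring

lemma triangle_eq (c : ℕ → ℚ) (e n d : ℕ) (hd : d ≤ n) :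
    ∑ m ∈ Finset.range (n + 1), ∑ M ∈ Finset.range m,
        c M * ((m - M : ℕ) : ℚ) ^ e * PowerSeries.coeff d (oneSubExpNeg ^ m)
      = ∑ m2 ∈ Finset.Icc 1 n, ∑ M ∈ Finset.range (n + 1),
          (m2 : ℚ) ^ e * c M * PowerSeries.coeff d (oneSubExpNeg ^ (m2 + M)) := by
  classical
  have hR : ∑ m2 ∈ Finset.Icc 1 n, ∑ M ∈ Finset.range (n + 1),
        (m2 : ℚ) ^ e * c M * PowerSeries.coeff d (oneSubExpNeg ^ (m2 + M))
      = ∑ y ∈ ((Finset.Icc 1 n) ×ˢ (Finset.range (n + 1))).filter (fun y => y.1 + y.2 ≤ n),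
          (y.1 : ℚ) ^ e * c y.2 * PowerSeries.coeff d (oneSubExpNeg ^ (y.1 + y.2)) := by
    rw [← Finset.sum_product']
    refine (Finset.sum_subset (Finset.filter_subset _ _) fun y hy hnot => ?_).symm
    simp only [Finset.mem_filter, hy, true_and, not_le] at hnot
    rw [coeff_z_pow_eq_zero (by omega), mul_zero]
  rw [hR, Finset.sum_sigma']
  refine Finset.sum_bij' (fun x _ => (x.1 - x.2, x.2)) (fun y _ => ⟨y.1 + y.2, y.2⟩)
    ?_ ?_ ?_ ?_ ?_
  · rintro ⟨m, M⟩ hx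
    simp only [Finset.mem_sigma, Finset.mem_range] at hx
    simp only [Finset.mem_filter, Finset.mem_product, Finset.mem_Icc, Finset.mem_range]
    omega
  · rintro ⟨m2, M⟩ hy
    simp only [Finset.mem_filter, Finset.mem_product, Finset.mem_Icc, Finset.mem_range] at hy
    simp only [Finset.mem_sigma, Finset.mem_range]
    omega
  · rintro ⟨m, M⟩ hx
    simp only [Finset.mem_sigma, Finset.mem_range] at hx
    dsimp only
    exact Sigma.ext (show m - M + M = m by omega) (heq_of_eq rfl)
  · rintro ⟨m2, M⟩ hy
    simp only [Finset.mem_filter, Finset.mem_product, Finset.mem_Icc, Finset.mem_range] at hy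
    dsimp only
    exact Prod.ext (show m2 + M - M = m2 by omega) rfl
  · rintro ⟨m, M⟩ hx
    simp only [Finset.mem_sigma, Finset.mem_range] at hx
    have h1 : m - M + M = m := by omega
    rw [h1]
    ring

lemma coeff_GF (r : ℕ) (K : Fin r → ℤ) (n e d : ℕ) :
    PowerSeries.coeff d (Gser n e * Fser r K n)
      = ∑ m2 ∈ Finset.Icc 1 n, ∑ M ∈ Finset.range (n + 1),
          (m2 : ℚ) ^ e * liCoeff r K M * PowerSeries.coeff d (oneSubExpNeg ^ (m2 + M)) := by
  rw [Gser, Fser, Finset.sum_mul_sum]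
  rw [map_sum]
  refine Finset.sum_congr rfl fun m2 _ => ?_
  rw [map_sum]
  refine Finset.sum_congr rfl fun M _ => ?_
  rw [smul_mul_smul_comm, ← pow_add, map_smul, smul_eq_mul]

lemma core (s : ℕ) (k : Fin s → ℤ) (a : ℤ) (b n : ℕ) {d : ℕ} (hd : d ≤ n) :
    PowerSeries.coeff d (Fser (s + 2) (Fin.snoc (Fin.snoc k a) (-(b : ℤ))) n)
      = ∑ j ∈ Finset.range (b + 1), (b.choose j : ℚ) *
          PowerSeries.coeff d
            (Gser n (b - j) * Fser (s + 1) (Fin.snoc k (a - (j : ℤ))) n) := by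
  rw [coeff_F]
  simp_rw [liCoeff_rec s k a b, Finset.sum_mul, mul_assoc]
  rw [Finset.sum_comm]
  refine Finset.sum_congr rfl fun j _ => ?_
  rw [← Finset.mul_sum]
  congr 1
  rw [coeff_GF, ← triangle_eq (fun M => liCoeff (s + 1) (Fin.snoc k (a - (j : ℤ))) M)
    (b - j) n d hd]
  refine Finset.sum_congr rfl fun m _ => ?_
  rw [Finset.sum_mul]


/-- Recurrence for the multi-Lah numbers with last index negated. Here the `r ≥ 2` indices
`(k_1,…,k_{r-2},k_{r-1},k_r)` are encoded as `Fin.snoc (Fin.snoc k a) b` with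
`k = (k_1,…,k_{r-2}) : Fin s → ℕ`, `a = k_{r-1}`, `b = k_r`, so `r = s + 2`. The claim:
`L^{(k_1,...,k_{r-1},−k_r)}(n,r) = Σ_{p=r}^{n} Σ_{l=1}^{p} Σ_{m_r=1}^{p} Σ_{j=0}^{k_r}
  (−1)^{m_r+l} m_r! ⬝ m_r^{k_r−j} ⬝ C(p,l) ⬝ C(k_r,j) ⬝ S_2(l,m_r)
  ⬝ L^{(k_1,...,k_{r-2},k_{r-1}−j)}(p−l, r−1) ⬝ n!/p!`. -/
theorem multiLah_neg_last_recurrence (s : ℕ) (k : Fin s → ℕ) (a b : ℕ)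
    (hk : ∀ i, 1 ≤ k i) (ha : 1 ≤ a) (hb : 1 ≤ b) (n : ℕ) (hn : 1 ≤ n) :
    multiLah (s + 2) (Fin.snoc (Fin.snoc (fun i => (k i : ℤ)) (a : ℤ)) (-(b : ℤ))) n =
      ∑ p ∈ Finset.Icc (s + 2) n, ∑ l ∈ Finset.Icc 1 p, ∑ mr ∈ Finset.Icc 1 p,
        ∑ j ∈ Finset.range (b + 1),
          (-1 : ℚ) ^ (mr + l) * (mr.factorial : ℚ) * (mr : ℚ) ^ (b - j) *
            (p.choose l : ℚ) * (b.choose j : ℚ) * stirling2 l mr *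
            multiLah (s + 1) (Fin.snoc (fun i => (k i : ℤ)) ((a : ℤ) - (j : ℤ))) (p - l) *
            ((n.factorial : ℚ) / (p.factorial : ℚ)) := by
  classical
  set kZ : Fin s → ℤ := fun i => (k i : ℤ) with hkZ
  have hRHS : (∑ p ∈ Finset.Icc (s + 2) n, ∑ l ∈ Finset.Icc 1 p, ∑ mr ∈ Finset.Icc 1 p,
        ∑ j ∈ Finset.range (b + 1),
          (-1 : ℚ) ^ (mr + l) * (mr.factorial : ℚ) * (mr : ℚ) ^ (b - j) *
            (p.choose l : ℚ) * (b.choose j : ℚ) * stirling2 l mr *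
            multiLah (s + 1) (Fin.snoc kZ ((a : ℤ) - (j : ℤ))) (p - l) *
            ((n.factorial : ℚ) / (p.factorial : ℚ)))
      = ∑ j ∈ Finset.range (b + 1), (b.choose j : ℚ) *
          ((n.factorial : ℚ) * PowerSeries.coeff n
            (Jser ^ (s + 2) *
              (Gser n (b - j) * Fser (s + 1) (Fin.snoc kZ ((a : ℤ) - (j : ℤ))) n))) := by
    have step1 : ∀ p ∈ Finset.Icc (s + 2) n, ∀ l ∈ Finset.Icc 1 p,
        (∑ mr ∈ Finset.Icc 1 p, ∑ j ∈ Finset.range (b + 1),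
          (-1 : ℚ) ^ (mr + l) * (mr.factorial : ℚ) * (mr : ℚ) ^ (b - j) *
            (p.choose l : ℚ) * (b.choose j : ℚ) * stirling2 l mr *
            multiLah (s + 1) (Fin.snoc kZ ((a : ℤ) - (j : ℤ))) (p - l) *
            ((n.factorial : ℚ) / (p.factorial : ℚ)))
        = ∑ j ∈ Finset.range (b + 1), (b.choose j : ℚ) * (n.factorial : ℚ) *
            (PowerSeries.coeff l (Gser n (b - j)) *
             PowerSeries.coeff (p - l)
               (Jser ^ (s + 1) * Fser (s + 1) (Fin.snoc kZ ((a : ℤ) - (j : ℤ))) n)) := by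
      intro p hp l hl
      simp only [Finset.mem_Icc] at hp hl
      rw [Finset.sum_comm]
      refine Finset.sum_congr rfl fun j _ => ?_
      have hmr : (∑ mr ∈ Finset.Icc 1 p,
          (-1 : ℚ) ^ (mr + l) * (mr.factorial : ℚ) * (mr : ℚ) ^ (b - j) *
            (p.choose l : ℚ) * (b.choose j : ℚ) * stirling2 l mr *
            multiLah (s + 1) (Fin.snoc kZ ((a : ℤ) - (j : ℤ))) (p - l) *
            ((n.factorial : ℚ) / (p.factorial : ℚ)))
          = (∑ mr ∈ Finset.Icc 1 p,
              (-1 : ℚ) ^ (mr + l) * (mr.factorial : ℚ) * (mr : ℚ) ^ (b - j) * stirling2 l mr) *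
            ((p.choose l : ℚ) * (b.choose j : ℚ) *
              multiLah (s + 1) (Fin.snoc kZ ((a : ℤ) - (j : ℤ))) (p - l) *
              ((n.factorial : ℚ) / (p.factorial : ℚ))) := by
        rw [Finset.sum_mul]
        exact Finset.sum_congr rfl fun mr _ => by ring
      rw [hmr, stirling_sum p l n (b - j) hl.2 hp.2,
        multiLah_eq (s + 1) (Fin.snoc kZ ((a : ℤ) - (j : ℤ))) (show p - l ≤ n by omega)]
      have hfac : (p.choose l : ℚ) * (l.factorial : ℚ) * ((p - l).factorial : ℚ)
          = (p.factorial : ℚ) := by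
        exact_mod_cast congrArg (Nat.cast : ℕ → ℚ)
          (Nat.choose_mul_factorial_mul_factorial hl.2)
      have hp0 : (p.factorial : ℚ) ≠ 0 := Nat.cast_ne_zero.2 p.factorial_ne_zero
      set cG := PowerSeries.coeff l (Gser n (b - j))
      set cB := PowerSeries.coeff (p - l)
        (Jser ^ (s + 1) * Fser (s + 1) (Fin.snoc kZ ((a : ℤ) - (j : ℤ))) n)
      calc (l.factorial : ℚ) * cG *
            ((p.choose l : ℚ) * (b.choose j : ℚ) *
              (((p - l).factorial : ℚ) * cB) * ((n.factorial : ℚ) / (p.factorial : ℚ)))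
          = (b.choose j : ℚ) * (cG * cB) *
              (((p.choose l : ℚ) * (l.factorial : ℚ) * ((p - l).factorial : ℚ)) *
                ((n.factorial : ℚ) / (p.factorial : ℚ))) := by ring
        _ = (b.choose j : ℚ) * (cG * cB) * (n.factorial : ℚ) := by
              rw [hfac, mul_div_cancel₀ _ hp0]
        _ = (b.choose j : ℚ) * (n.factorial : ℚ) * (cG * cB) := by ring
    have step2 : ∀ p ∈ Finset.Icc (s + 2) n,
        (∑ l ∈ Finset.Icc 1 p, ∑ j ∈ Finset.range (b + 1),
          (b.choose j : ℚ) * (n.factorial : ℚ) *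
            (PowerSeries.coeff l (Gser n (b - j)) *
             PowerSeries.coeff (p - l)
               (Jser ^ (s + 1) * Fser (s + 1) (Fin.snoc kZ ((a : ℤ) - (j : ℤ))) n)))
        = ∑ j ∈ Finset.range (b + 1), (b.choose j : ℚ) * (n.factorial : ℚ) *
            PowerSeries.coeff p
              (Gser n (b - j) *
                (Jser ^ (s + 1) * Fser (s + 1) (Fin.snoc kZ ((a : ℤ) - (j : ℤ))) n)) := by
      intro p _
      rw [Finset.sum_comm]
      refine Finset.sum_congr rfl fun j _ => ?_
      rw [coeff_mul_of_const0 _ _ p (coeff_G_zero n (b - j)), Finset.mul_sum]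
    have step12 : ∀ p ∈ Finset.Icc (s + 2) n,
        (∑ l ∈ Finset.Icc 1 p, ∑ mr ∈ Finset.Icc 1 p,
        ∑ j ∈ Finset.range (b + 1),
          (-1 : ℚ) ^ (mr + l) * (mr.factorial : ℚ) * (mr : ℚ) ^ (b - j) *
            (p.choose l : ℚ) * (b.choose j : ℚ) * stirling2 l mr *
            multiLah (s + 1) (Fin.snoc kZ ((a : ℤ) - (j : ℤ))) (p - l) *
            ((n.factorial : ℚ) / (p.factorial : ℚ)))
        = ∑ j ∈ Finset.range (b + 1), (b.choose j : ℚ) * (n.factorial : ℚ) *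
            PowerSeries.coeff p
              (Gser n (b - j) *
                (Jser ^ (s + 1) * Fser (s + 1) (Fin.snoc kZ ((a : ℤ) - (j : ℤ))) n)) := by
      intro p hp
      rw [← step2 p hp]
      exact Finset.sum_congr rfl fun l hl => step1 p hp l hl
    rw [Finset.sum_congr rfl step12, Finset.sum_comm]
    refine Finset.sum_congr rfl fun j _ => ?_
    have hsub : ∑ p ∈ Finset.Icc (s + 2) n,
        PowerSeries.coeff p
          (Gser n (b - j) *
            (Jser ^ (s + 1) * Fser (s + 1) (Fin.snoc kZ ((a : ℤ) - (j : ℤ))) n))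
        = ∑ p ∈ Finset.range (n + 1),
        PowerSeries.coeff p
          (Gser n (b - j) *
            (Jser ^ (s + 1) * Fser (s + 1) (Fin.snoc kZ ((a : ℤ) - (j : ℤ))) n)) := by
      refine Finset.sum_subset (fun q hq => Finset.mem_range.2 (by
        simp only [Finset.mem_Icc] at hq; omega)) fun q hq hnot => ?_
      simp only [Finset.mem_range, Finset.mem_Icc, not_and, not_le] at hq hnot
      exact coeff_GJF_small (s + 1) (Fin.snoc kZ ((a : ℤ) - (j : ℤ))) n (b - j) (by omega)
    have hJ : Jser * (Gser n (b - j) *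
          (Jser ^ (s + 1) * Fser (s + 1) (Fin.snoc kZ ((a : ℤ) - (j : ℤ))) n))
        = Jser ^ (s + 2) *
          (Gser n (b - j) * Fser (s + 1) (Fin.snoc kZ ((a : ℤ) - (j : ℤ))) n) := by ring
    rw [← Finset.mul_sum, hsub, ← coeff_J_mul, hJ, mul_assoc]
  rw [hRHS, multiLah_eq (s + 2) _ (le_refl n), PowerSeries.coeff_mul, Finset.mul_sum]
  have hcore : ∀ x ∈ Finset.HasAntidiagonal.antidiagonal n,
      (n.factorial : ℚ) * (PowerSeries.coeff x.1 (Jser ^ (s + 2)) *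
        PowerSeries.coeff x.2 (Fser (s + 2) (Fin.snoc (Fin.snoc kZ (a : ℤ)) (-(b : ℤ))) n))
      = ∑ j ∈ Finset.range (b + 1), (b.choose j : ℚ) *
          ((n.factorial : ℚ) * (PowerSeries.coeff x.1 (Jser ^ (s + 2)) *
            PowerSeries.coeff x.2
              (Gser n (b - j) * Fser (s + 1) (Fin.snoc kZ ((a : ℤ) - (j : ℤ))) n))) := by
    intro x hx
    have hx2 : x.2 ≤ n := by have := Finset.HasAntidiagonal.mem_antidiagonal.1 hx; omega
    rw [core s kZ (a : ℤ) b n hx2, Finset.mul_sum, Finset.mul_sum]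
    exact Finset.sum_congr rfl fun j _ => by ring
  rw [Finset.sum_congr rfl hcore, Finset.sum_comm]
  refine Finset.sum_congr rfl fun j _ => ?_
  rw [PowerSeries.coeff_mul, Finset.mul_sum, Finset.mul_sum]
end

section
/- For integers k_1,...,k_{r−1} ≥ 1 and k_r ≥ 2, and for every t with 0 < |t| < 1, the multiple logarithm satisfies (d/dt) Li_{k_1,...,k_{r−1},k_r}(t) = (1/t) · Li_{k_1,...,k_{r−1},k_r−1}(t). -/
/-- The multiple logarithm `Li_{k_1,...,k_r}(z) = Σ_{0<m_1<⋯<m_r} z^{m_r}/(m_1^{k_1}⋯m_r^{k_r})`,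
where the sum ranges over all strictly increasing `r`-tuples of positive integers. Since the
tuple is strictly increasing, `m_r` is the supremum of its entries. -/
noncomputable def multiLog (r : ℕ) (k : Fin r → ℕ) (z : ℝ) : ℝ :=
  ∑' m : {m : Fin r → ℕ // StrictMono m ∧ ∀ i, 0 < m i},
    z ^ (Finset.univ.sup m.1) / ∏ i, (m.1 i : ℝ) ^ k i

/-- For a strictly monotone tuple, the sup of the entries is the last entry. -/
lemma sup_univ_of_strictMono {r : ℕ} (m : Fin (r + 1) → ℕ) (hm : StrictMono m) :
    Finset.univ.sup m = m (Fin.last r) :=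
  le_antisymm (Finset.sup_le fun i _ => hm.monotone (Fin.le_last i))
    (Finset.le_sup (Finset.mem_univ _))

/-- Summability of products of geometric terms over tuples. -/
lemma summable_pi_geometric (n : ℕ) {ρ : ℝ} (h0 : 0 ≤ ρ) (h1 : ρ < 1) :
    Summable (fun v : Fin n → ℕ => ∏ i, ρ ^ v i) := by
  induction n with
  | zero =>
    simpa using summable_of_finite_support (Set.Finite.subset (Set.finite_univ) (by simp))
  | succ n ih =>
    rw [← (Fin.consEquiv (fun _ : Fin (n + 1) => ℕ)).summable_iff]
    have h := (summable_geometric_of_lt_one h0 h1).mul_of_nonneg ih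
      (fun j => pow_nonneg h0 j)
      (fun v => Finset.prod_nonneg fun i _ => pow_nonneg h0 _)
    refine h.congr fun p => ?_
    simp [Fin.consEquiv, Fin.prod_univ_succ]

/-- The gap sequence of a tuple. -/
def gaps {r : ℕ} (m : Fin (r + 1) → ℕ) : Fin (r + 1) → ℕ :=
  Fin.cons (m 0) (fun j => m j.succ - m j.castSucc)

lemma gaps_injOn {r : ℕ} (m m' : Fin (r + 1) → ℕ) (hm : StrictMono m) (hm' : StrictMono m')
    (h : gaps m = gaps m') : m = m' := by
  funext i
  induction i using Fin.induction with
  | zero => simpa [gaps] using congrFun h 0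
  | succ j ih =>
    have h1 := congrFun h j.succ
    simp only [gaps, Fin.cons_succ] at h1
    have h2 : m j.castSucc ≤ m j.succ := (hm (Fin.castSucc_lt_succ : j.castSucc < j.succ)).le
    have h3 : m' j.castSucc ≤ m' j.succ := (hm' (Fin.castSucc_lt_succ : j.castSucc < j.succ)).le
    omega

lemma sum_gaps {r : ℕ} (m : Fin (r + 1) → ℕ) (hm : StrictMono m) :
    ∑ i, gaps m i = m (Fin.last r) := by
  set f : ℕ → ℕ := fun n => m ⟨min n r, Nat.lt_succ_of_le (min_le_right n r)⟩ with hfdef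
  have hf : Monotone f := fun a c hac => hm.monotone (by simp [Fin.le_def]; omega)
  have key : ∑ j : Fin r, (m j.succ - m j.castSucc)
      = ∑ j ∈ Finset.range r, (f (j + 1) - f j) := by
    rw [← Fin.sum_univ_eq_sum_range (fun j => f (j + 1) - f j) r]
    refine Finset.sum_congr rfl fun j _ => ?_
    have h1 : f (j.1 + 1) = m j.succ := by
      simp only [hfdef]; congr 1; ext
      simp [Nat.min_eq_left (Nat.succ_le_of_lt j.isLt)]
    have h2 : f j.1 = m j.castSucc := by
      simp only [hfdef]; congr 1; ext; simp [Nat.min_eq_left j.isLt.le]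
    rw [h1, h2]
  have hfr : f r = m (Fin.last r) := by
    simp only [hfdef]; congr 1; ext; simp
  have hf0 : f 0 = m 0 := by
    simp only [hfdef]; congr 1
  have h0r : m 0 ≤ m (Fin.last r) := hm.monotone (Fin.zero_le _)
  rw [Fin.sum_univ_succ]
  simp only [gaps, Fin.cons_zero, Fin.cons_succ]
  rw [key, Finset.sum_range_tsub hf, hfr, hf0]
  omega

/-- For integers `k_1,...,k_{r-1} ≥ 1` and `k_r ≥ 2` and every real `t` with `0 < |t| < 1`,
`(d/dt) Li_{k_1,...,k_{r-1},k_r}(t) = (1/t) ⬝ Li_{k_1,...,k_{r-1},k_r−1}(t)`. Here the indices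
`(k_1,…,k_{r-1},k_r)` are encoded as `Fin.snoc k b` with `k = (k_1,…,k_{r-1}) : Fin s → ℕ` and
`b = k_r`, so `r = s + 1`. -/
theorem hasDerivAt_multiLog (s : ℕ) (k : Fin s → ℕ) (hk : ∀ i, 1 ≤ k i) (b : ℕ) (hb : 2 ≤ b)
    (t : ℝ) (ht0 : 0 < |t|) (ht1 : |t| < 1) :
    HasDerivAt (multiLog (s + 1) (Fin.snoc k b))
      ((1 / t) * multiLog (s + 1) (Fin.snoc k (b - 1)) t) t := by
  have htne : t ≠ 0 := abs_pos.mp ht0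
  set ρ : ℝ := (|t| + 1) / 2 with hρdef
  have hρ0 : 0 < ρ := by positivity
  have hρ1 : ρ < 1 := by rw [hρdef]; linarith
  have htρ : |t| < ρ := by rw [hρdef]; linarith
  set T := {m : Fin (s + 1) → ℕ // StrictMono m ∧ ∀ i, 0 < m i} with hT
  -- notation
  set N : T → ℕ := fun m => m.1 (Fin.last s) with hN
  set C : T → ℝ := fun m => ∏ i, (m.1 i : ℝ) ^ (Fin.snoc k b i) with hC
  set C' : T → ℝ := fun m => ∏ i, (m.1 i : ℝ) ^ (Fin.snoc k (b - 1) i) with hC'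
  have hsup : ∀ m : T, Finset.univ.sup m.1 = N m := fun m =>
    sup_univ_of_strictMono m.1 m.2.1
  have hN1 : ∀ m : T, 1 ≤ N m := fun m => m.2.2 _
  have hmpos : ∀ (m : T) (i : Fin (s + 1)), (0 : ℝ) < (m.1 i : ℝ) := fun m i => by
    exact_mod_cast m.2.2 i
  have hC'pos : ∀ m : T, 0 < C' m := fun m =>
    Finset.prod_pos fun i _ => pow_pos (hmpos m i) _
  have hCsplit : ∀ m : T, C m = C' m * (N m : ℝ) := by
    intro m
    rw [hC, hC']
    simp only [Fin.prod_univ_castSucc, Fin.snoc_castSucc, Fin.snoc_last]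
    rw [mul_assoc]
    congr 1
    rw [← pow_succ]
    congr 1
    omega
  have hCge : ∀ m : T, (N m : ℝ) ≤ C m := by
    intro m
    rw [hCsplit m]
    nth_rewrite 1 [← one_mul (N m : ℝ)]
    apply mul_le_mul_of_nonneg_right _ (Nat.cast_nonneg _)
    calc (1 : ℝ) = ∏ _i : Fin (s + 1), 1 := by simp
      _ ≤ C' m := by
          refine Finset.prod_le_prod (fun i _ => zero_le_one) (fun i _ => ?_)
          refine one_le_pow₀ ?_
          exact_mod_cast m.2.2 i
  have hCpos : ∀ m : T, 0 < C m := fun m => by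
    rw [hCsplit m]
    exact mul_pos (hC'pos m) (by exact_mod_cast hN1 m)
  -- the summable bound
  set u : T → ℝ := fun m => (N m : ℝ) * ρ ^ (N m - 1) / C m with hu
  have hu_nonneg : ∀ m : T, 0 ≤ u m := fun m => by
    apply div_nonneg _ (hCpos m).le
    positivity
  have hu_le : ∀ m : T, u m ≤ (1 / ρ) * ∏ i, ρ ^ (gaps m.1 i) := by
    intro m
    have h1 : u m ≤ ρ ^ (N m - 1) := by
      rw [hu, div_le_iff₀ (hCpos m)]
      calc (N m : ℝ) * ρ ^ (N m - 1) = ρ ^ (N m - 1) * (N m : ℝ) := mul_comm _ _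
        _ ≤ ρ ^ (N m - 1) * C m := by
            apply mul_le_mul_of_nonneg_left (hCge m) (by positivity)
    have h2 : (1 / ρ) * ∏ i, ρ ^ (gaps m.1 i) = ρ ^ (N m - 1) := by
      rw [Finset.prod_pow_eq_pow_sum, sum_gaps m.1 m.2.1]
      have he : m.1 (Fin.last s) = (N m - 1) + 1 := by
        have h1' := hN1 m; simp only [hN] at h1' ⊢; omega
      rw [he, pow_succ]
      field_simp
    rw [h2]; exact h1
  have hu_summable : Summable u := by
    have hG : Summable (fun v : Fin (s + 1) → ℕ => (1 / ρ) * ∏ i, ρ ^ v i) :=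
      (summable_pi_geometric (s + 1) hρ0.le hρ1).mul_left _
    have hinj : Function.Injective (fun m : T => gaps m.1) := by
      intro m m' h
      exact Subtype.ext (gaps_injOn m.1 m'.1 m.2.1 m'.2.1 h)
    exact Summable.of_nonneg_of_le hu_nonneg hu_le (hG.comp_injective hinj)
  -- derivative of each term
  have hderiv : ∀ (m : T) (z : ℝ),
      HasDerivAt (fun z : ℝ => z ^ (Finset.univ.sup m.1) / C m)
        ((N m : ℝ) * z ^ (N m - 1) / C m) z := by
    intro m z
    rw [hsup m]
    exact (hasDerivAt_pow (N m) z).div_const (C m)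
  -- bound on derivatives on the ball
  have hbound : ∀ (m : T) (z : ℝ), z ∈ Metric.ball (0 : ℝ) ρ →
      ‖(N m : ℝ) * z ^ (N m - 1) / C m‖ ≤ u m := by
    intro m z hz
    rw [Metric.mem_ball, dist_zero_right, Real.norm_eq_abs] at hz
    rw [Real.norm_eq_abs, abs_div, abs_mul, abs_pow, Nat.abs_cast,
      abs_of_pos (hCpos m), hu, div_le_div_iff_of_pos_right (hCpos m)]
    exact mul_le_mul_of_nonneg_left (pow_le_pow_left₀ (abs_nonneg z) hz.le _)
      (Nat.cast_nonneg _)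
  -- summability at the point t
  have hg0 : Summable (fun m : T => t ^ (Finset.univ.sup m.1) / C m) := by
    apply Summable.of_norm_bounded hu_summable
    intro m
    rw [Real.norm_eq_abs, abs_div, abs_pow, abs_of_pos (hCpos m), hsup m, hu]
    rw [div_le_div_iff_of_pos_right (hCpos m)]
    calc |t| ^ N m ≤ ρ ^ N m := pow_le_pow_left₀ (abs_nonneg t) htρ.le _
      _ = ρ ^ (N m - 1 + 1) := by congr 1; have := hN1 m; omega
      _ = ρ ^ (N m - 1) * ρ := pow_succ ρ _
      _ ≤ ρ ^ (N m - 1) * 1 := by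
          apply mul_le_mul_of_nonneg_left hρ1.le (by positivity)
      _ = 1 * ρ ^ (N m - 1) := by ring
      _ ≤ (N m : ℝ) * ρ ^ (N m - 1) := by
          apply mul_le_mul_of_nonneg_right _ (by positivity)
          exact_mod_cast hN1 m
  -- t is in the ball
  have htmem : t ∈ Metric.ball (0 : ℝ) ρ := by
    rw [Metric.mem_ball, dist_zero_right, Real.norm_eq_abs]; exact htρ
  have main := hasDerivAt_tsum_of_isPreconnected hu_summable Metric.isOpen_ball
    (convex_ball (0 : ℝ) ρ).isPreconnected
    (fun m z _ => hderiv m z) (fun m z hz => hbound m z hz) htmem hg0 htmem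
  -- identify the sum of derivatives
  have hterm : ∀ m : T, (N m : ℝ) * t ^ (N m - 1) / C m
      = (1 / t) * (t ^ (Finset.univ.sup m.1) / C' m) := by
    intro m
    rw [hsup m, hCsplit m]
    have hNne : (N m : ℝ) ≠ 0 := by exact_mod_cast Nat.cast_ne_zero.mpr (Nat.one_le_iff_ne_zero.mp (hN1 m))
    have hC'ne : C' m ≠ 0 := (hC'pos m).ne'
    have htn : t ^ N m = t * t ^ (N m - 1) := by
      rw [← pow_succ']
      congr 1
      have := hN1 m
      omega
    field_simp [htn]
    rw [htn]
    ring
  have hsum_eq : (∑' m : T, (N m : ℝ) * t ^ (N m - 1) / C m)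
      = (1 / t) * multiLog (s + 1) (Fin.snoc k (b - 1)) t := by
    rw [tsum_congr hterm, tsum_mul_left]
    rfl
  rw [← hsum_eq]
  exact main
end
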